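/- Let μ be a Borel probability measure on ℝ with ∫_ℝ e^{θu} dμ(u) < ∞ for all θ ∈ ℝ. For l > 0 define f_l(u) = min(max(u, −l), l), h_l(x) = sup_{θ∈ℝ} (θx − ln ∫_ℝ e^{θ f_l(u)} dμ(u)), and h(x) = sup_{θ∈ℝ} (θx − ln ∫_ℝ e^{θu} dμ(u)). Then for every ε > 0 there exists L(ε) < ∞ such that for all l > L(ε) and all x ∈ ℝ, h(x) ≤ h_l(x) + ε. -/

import Mathlib

open MeasureTheory Filter Set
open scoped ENNReal Topology

noncomputable section

/-- Truncation `f_l` at level `l`. -/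
def trunc (l q : ℝ) : ℝ := min (max q (-l)) l

lemma abs_trunc_le {l : ℝ} (hl : 0 ≤ l) (u : ℝ) : |trunc l u| ≤ l := by
  refine abs_le.mpr ⟨le_min (le_max_right _ _) (by linarith), min_le_right _ _⟩

lemma trunc_mul_le {l : ℝ} (hl : 0 ≤ l) (θ u : ℝ) :
    θ * trunc l u ≤ max (θ * u) (-(|θ| * l)) := by
  rcases le_total u (-l) with h | h
  · have ht : trunc l u = -l := by
      rw [trunc, max_eq_right h, min_eq_left (by linarith)]
    rw [ht]
    rcases le_or_gt 0 θ with hθ | hθ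
    · rw [abs_of_nonneg hθ]; exact le_max_of_le_right (by nlinarith)
    · exact le_max_of_le_left (by nlinarith)
  · rcases le_total u l with h2 | h2
    · have ht : trunc l u = u := by rw [trunc, max_eq_left h, min_eq_left h2]
      rw [ht]; exact le_max_left _ _
    · have ht : trunc l u = l := by rw [trunc, max_eq_left h, min_eq_right h2]
      rw [ht]
      rcases le_or_gt 0 θ with hθ | hθ
      · exact le_max_of_le_left (by nlinarith)
      · rw [abs_of_neg hθ]; exact le_max_of_le_right (by nlinarith)

lemma exp_trunc_le {l : ℝ} (hl : 0 ≤ l) (θ u : ℝ) :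
    Real.exp (θ * trunc l u) ≤ Real.exp (θ * u) +
      Set.indicator {v : ℝ | l < |v|} (fun _ => Real.exp (-(|θ| * l))) u := by
  rcases le_or_gt (|u|) l with h | h
  · have ht : trunc l u = u := by
      rw [abs_le] at h
      rw [trunc, max_eq_left h.1, min_eq_left h.2]
    rw [ht]
    have h0 : 0 ≤ Set.indicator {v : ℝ | l < |v|}
        (fun _ => Real.exp (-(|θ| * l))) u :=
      Set.indicator_nonneg (fun _ _ => (Real.exp_pos _).le) u
    linarith
  · rw [Set.indicator_of_mem (by exact h)]
    calc Real.exp (θ * trunc l u)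
        ≤ Real.exp (max (θ * u) (-(|θ| * l))) :=
          Real.exp_le_exp.mpr (trunc_mul_le hl θ u)
      _ = max (Real.exp (θ * u)) (Real.exp (-(|θ| * l))) :=
          Real.exp_monotone.map_max
      _ ≤ _ := max_le (le_add_of_nonneg_right (Real.exp_pos _).le)
          (le_add_of_nonneg_left (Real.exp_pos _).le)

/-- The Cramér transform `h(x) = sup_θ (θx − ln ∫ e^{θu} dμ(u))`, as an extended
real number. -/
def cramerE (μ : Measure ℝ) (x : ℝ) : EReal :=
  ⨆ θ : ℝ, ((θ * x - Real.log (∫ u, Real.exp (θ * u) ∂μ) : ℝ) : EReal)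

/-- The Cramér transform of the truncated variable,
`h_l(x) = sup_θ (θx − ln ∫ e^{θ f_l(u)} dμ(u))`, as an extended real number. -/
def cramerTruncE (μ : Measure ℝ) (l x : ℝ) : EReal :=
  ⨆ θ : ℝ, ((θ * x - Real.log (∫ u, Real.exp (θ * trunc l u) ∂μ) : ℝ) : EReal)

/-- **Lemma (truncation of the Cramér transform).**
If `μ` is a Borel probability measure on `ℝ` with everywhere-finite moment
generating function, then for every `ε > 0` there is `L(ε) < ∞` such that for all
`l > L(ε)` and all `x ∈ ℝ`, `h(x) ≤ h_l(x) + ε`. -/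
theorem cramer_truncation_bound
    (μ : Measure ℝ) [IsProbabilityMeasure μ]
    (hmgf : ∀ θ : ℝ, Integrable (fun u => Real.exp (θ * u)) μ) :
    ∀ ε : ℝ, 0 < ε → ∃ L : ℝ, ∀ l : ℝ, L < l → ∀ x : ℝ,
      cramerE μ x ≤ cramerTruncE μ l x + (ε : EReal) := by
  intro ε hε
  set C : ℝ := (∫ u, Real.exp (1 * u) ∂μ) + ∫ u, Real.exp ((-1) * u) ∂μ with hCdef
  clear_value C
  have hεexp : (0:ℝ) < Real.exp ε - 1 := by
    have := Real.add_one_lt_exp (ne_of_gt hε)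
    linarith
  refine ⟨max 0 (max (Real.log (2 * C)) (Real.log (2 * C / (Real.exp ε - 1)))), ?_⟩
  intro l hl x
  have hl0 : 0 < l := lt_of_le_of_lt (le_max_left _ _) hl
  -- the bad set and its measure
  set S : Set ℝ := {v : ℝ | l < |v|} with hSdef
  have hS : MeasurableSet S := measurableSet_lt measurable_const continuous_abs.measurable
  set δ : ℝ := (μ S).toReal with hδdef
  clear_value δ
  have hδ0 : 0 ≤ δ := hδdef ▸ ENNReal.toReal_nonneg
  -- Markov / Chernoff bound : δ ≤ exp (-l) * C
  have markov : ∀ c : ℝ, (μ {u : ℝ | Real.exp l ≤ Real.exp (c * u)}).toReal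
      ≤ Real.exp (-l) * ∫ u, Real.exp (c * u) ∂μ := by
    intro c
    have h := mul_meas_ge_le_integral_of_nonneg
      (ae_of_all μ fun u => (Real.exp_pos (c * u)).le) (hmgf c) (Real.exp l)
    have hel : (0:ℝ) < Real.exp l := Real.exp_pos l
    rw [Real.exp_neg]
    rw [inv_mul_eq_div, le_div_iff₀ hel]
    simp only [Measure.real] at h; linarith [h]
  have hsubset : S ⊆ {u : ℝ | Real.exp l ≤ Real.exp (1 * u)}
      ∪ {u : ℝ | Real.exp l ≤ Real.exp ((-1) * u)} := by
    intro u hu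
    have hu' : l < |u| := hu
    rcases le_or_gt 0 u with h0 | h0
    · left
      rw [abs_of_nonneg h0] at hu'
      exact Real.exp_le_exp.mpr (by linarith)
    · right
      rw [abs_of_neg h0] at hu'
      exact Real.exp_le_exp.mpr (by linarith)
  have hδC : δ ≤ Real.exp (-l) * C := by
    have h1 : μ S ≤ μ {u : ℝ | Real.exp l ≤ Real.exp (1 * u)}
        + μ {u : ℝ | Real.exp l ≤ Real.exp ((-1) * u)} :=
      (measure_mono hsubset).trans (measure_union_le _ _)
    have h2 : δ ≤ (μ {u : ℝ | Real.exp l ≤ Real.exp (1 * u)}).toReal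
        + (μ {u : ℝ | Real.exp l ≤ Real.exp ((-1) * u)}).toReal := by
      rw [hδdef, ← ENNReal.toReal_add (measure_ne_top μ _) (measure_ne_top μ _)]
      exact ENNReal.toReal_mono (by finiteness) h1
    calc δ ≤ _ := h2
      _ ≤ Real.exp (-l) * ∫ u, Real.exp (1 * u) ∂μ
          + Real.exp (-l) * ∫ u, Real.exp ((-1) * u) ∂μ :=
        add_le_add (markov 1) (markov (-1))
      _ = Real.exp (-l) * C := by rw [hCdef]; ring
  -- the two numerical conditions on δ
  have hexp2C : 2 * C ≤ Real.exp l :=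
    (Real.le_exp_log _).trans (Real.exp_le_exp.mpr
      (le_of_lt (lt_of_le_of_lt (le_trans (le_max_left _ _) (le_max_right _ _)) hl)))
  have hexp2C' : 2 * C / (Real.exp ε - 1) ≤ Real.exp l :=
    (Real.le_exp_log _).trans (Real.exp_le_exp.mpr
      (le_of_lt (lt_of_le_of_lt (le_trans (le_max_right _ _) (le_max_right _ _)) hl)))
  have helpos : (0:ℝ) < Real.exp l := Real.exp_pos l
  have hδhalf : δ ≤ 1 / 2 := by
    have : Real.exp (-l) * C ≤ 1 / 2 := by
      rw [Real.exp_neg, inv_mul_eq_div, div_le_div_iff₀ helpos (by norm_num)]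
      nlinarith
    linarith
  have hδε : 2 * δ ≤ Real.exp ε - 1 := by
    have h1 : 2 * C ≤ Real.exp l * (Real.exp ε - 1) := by
      rw [div_le_iff₀ hεexp] at hexp2C'
      linarith
    have : Real.exp (-l) * C ≤ (Real.exp ε - 1) / 2 := by
      rw [Real.exp_neg, inv_mul_eq_div, div_le_div_iff₀ helpos (by norm_num)]
      nlinarith
    linarith
  -- the key bound on MGFs, for each θ
  have key : ∀ θ : ℝ,
      Real.log (∫ u, Real.exp (θ * trunc l u) ∂μ)
        ≤ Real.log (∫ u, Real.exp (θ * u) ∂μ) + ε := by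
    intro θ
    set A : ℝ := ∫ u, Real.exp (θ * trunc l u) ∂μ with hAdef
    set B : ℝ := ∫ u, Real.exp (θ * u) ∂μ with hBdef
    set b : ℝ := Real.exp (-(|θ| * l)) with hbdef
    have hb0 : 0 < b := Real.exp_pos _
    -- integrability of the truncated exponential
    have hintA : Integrable (fun u => Real.exp (θ * trunc l u)) μ := by
      refine Integrable.mono' (integrable_const (Real.exp (|θ| * l))) ?_ ?_
      · exact (Real.continuous_exp.comp (continuous_const.mul
          ((continuous_id.max continuous_const).min continuous_const))).aestronglyMeasurable
      · refine ae_of_all μ fun u => ?_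
        rw [Real.norm_eq_abs, abs_of_pos (Real.exp_pos _)]
        refine Real.exp_le_exp.mpr ?_
        calc θ * trunc l u ≤ |θ * trunc l u| := le_abs_self _
          _ = |θ| * |trunc l u| := abs_mul _ _
          _ ≤ |θ| * l := mul_le_mul_of_nonneg_left (abs_trunc_le hl0.le u) (abs_nonneg θ)
    -- lower bound : b ≤ A
    have hbA : b ≤ A := by
      have := integral_mono (μ := μ) (integrable_const b) hintA (fun u => by
        refine Real.exp_le_exp.mpr ?_
        calc -(|θ| * l) ≤ -(|θ| * |trunc l u|) := by
              have := mul_le_mul_of_nonneg_left (abs_trunc_le hl0.le u) (abs_nonneg θ)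
              linarith
          _ = -|θ * trunc l u| := by rw [abs_mul]
          _ ≤ θ * trunc l u := neg_abs_le _)
      simpa using this
    -- upper bound : A ≤ B + b * δ
    have hAB : A ≤ B + b * δ := by
      have hint2 : Integrable (fun u => Real.exp (θ * u)
          + Set.indicator S (fun _ => b) u) μ :=
        (hmgf θ).add ((integrable_const b).indicator hS)
      have h1 : A ≤ ∫ u, (Real.exp (θ * u) + Set.indicator S (fun _ => b) u) ∂μ :=
        integral_mono hintA hint2 (fun u => exp_trunc_le hl0.le θ u)
      rw [integral_add (hmgf θ) ((integrable_const b).indicator hS),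
        integral_indicator_const _ hS] at h1
      rw [hδdef]
      calc A ≤ _ := h1
        _ = B + b * (μ S).toReal := by rw [smul_eq_mul, hBdef]; simp only [Measure.real]; ring
    -- lower bound : b * (1 - δ) ≤ B
    have hbB : b * (1 - δ) ≤ B := by
      have hpt : ∀ u : ℝ, Set.indicator Sᶜ (fun _ => b) u ≤ Real.exp (θ * u) := by
        intro u
        rcases Classical.em (u ∈ Sᶜ) with h | h
        · rw [Set.indicator_of_mem h]
          have hu : |u| ≤ l := le_of_not_gt h
          refine Real.exp_le_exp.mpr ?_
          calc -(|θ| * l) ≤ -(|θ| * |u|) := by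
                have := mul_le_mul_of_nonneg_left hu (abs_nonneg θ)
                linarith
            _ = -|θ * u| := by rw [abs_mul]
            _ ≤ θ * u := neg_abs_le _
        · rw [Set.indicator_of_notMem h]
          exact (Real.exp_pos _).le
      have h1 : ∫ u, Set.indicator Sᶜ (fun _ => b) u ∂μ ≤ B :=
        integral_mono ((integrable_const b).indicator hS.compl) (hmgf θ) hpt
      rw [integral_indicator_const _ hS.compl, smul_eq_mul] at h1
      have hcompl : (μ Sᶜ).toReal = 1 - δ := by
        rw [prob_compl_eq_one_sub hS, hδdef,
          ENNReal.toReal_sub_of_le prob_le_one ENNReal.one_ne_top, ENNReal.toReal_one]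
      simp only [Measure.real] at h1; rw [hcompl] at h1
      linarith [h1]
    -- combine
    have hBpos : 0 < B := lt_of_lt_of_le (by nlinarith) hbB
    have hApos : 0 < A := lt_of_lt_of_le hb0 hbA
    have hfin : A ≤ B * Real.exp ε := by
      have hb2B : b ≤ 2 * B := by nlinarith
      nlinarith
    calc Real.log A ≤ Real.log (B * Real.exp ε) := Real.log_le_log hApos hfin
      _ = Real.log B + ε := by rw [Real.log_mul (ne_of_gt hBpos) (Real.exp_ne_zero ε),
        Real.log_exp]
  -- conclude at the level of EReal suprema
  rw [cramerE]
  refine iSup_le fun θ => ?_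
  have hreal : θ * x - Real.log (∫ u, Real.exp (θ * u) ∂μ)
      ≤ (θ * x - Real.log (∫ u, Real.exp (θ * trunc l u) ∂μ)) + ε := by
    linarith [key θ]
  calc ((θ * x - Real.log (∫ u, Real.exp (θ * u) ∂μ) : ℝ) : EReal)
      ≤ (((θ * x - Real.log (∫ u, Real.exp (θ * trunc l u) ∂μ)) + ε : ℝ) : EReal) :=
        EReal.coe_le_coe_iff.mpr hreal
    _ = ((θ * x - Real.log (∫ u, Real.exp (θ * trunc l u) ∂μ) : ℝ) : EReal) + (ε : EReal) := by
        rw [EReal.coe_add]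
    _ ≤ cramerTruncE μ l x + (ε : EReal) := by
        refine add_le_add_left ?_ _
        exact le_iSup (fun θ : ℝ =>
          ((θ * x - Real.log (∫ u, Real.exp (θ * trunc l u) ∂μ) : ℝ) : EReal)) θ

end
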